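/- (Ill-posed world scenes for fundamental matrix estimation.) Let b ∈ ℝ⁷ with rank M(b) = 3 and let X₁,…,X₇ ∈ ℝ³ satisfy (Xᵢ)₃ ≠ 0 for all i. Let M₃(b) denote the 3×3 matrix formed by the first three columns of M(b), and for δb ∈ ℝ⁷ let δM(δb) denote the 3×4 matrix with rows (0, δb₁, δb₂, δb₃), (δb₄, δb₅, δb₆, δb₇), (0, 0, 0, 0). Consider the linear map T : (ℝ³)⁷ × ℝ⁷ → (ℝ² × ℝ²)⁷ defined by T(δX₁,…,δX₇, δb) = ( Dβ(Xᵢ)(δXᵢ), Dβ(M(b)(Xᵢ;1))( M₃(b) δXᵢ + δM(δb)(Xᵢ;1) ) )_{i=1,…,7}, where (Xᵢ;1) ∈ ℝ⁴ appends a 1 to Xᵢ and Dβ(Z) denotes the derivative of β at Z. (T is the differential of the forward projection map at the world scene (b, X₁,…,X₇).) Then T fails to be injective if and only if there exists a nonzero symmetric 4×4 real matrix Q such that (Xᵢ;1)ᵀ Q (Xᵢ;1) = 0 for every i = 1,…,7, and (s·v(b); 1)ᵀ Q (s·v(b); 1) = 0 for every s ∈ ℝ. (Geometrically: there exists a quadric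 surface passing through X₁,…,X₇ and containing the baseline, which is the line through the origin with direction v(b).) -/

import Mathlib

open Matrix

/-- The 3×4 camera matrix `M(b)` with rows `(1, b₁, b₂, b₃)`, `(b₄, b₅, b₆, b₇)`,
`(0, 0, 0, 1)`. -/
def Mcam (b : Fin 7 → ℝ) : Matrix (Fin 3) (Fin 4) ℝ :=
  !![1, b 0, b 1, b 2; b 3, b 4, b 5, b 6; 0, 0, 0, 1]

/-- The 3×3 matrix `M₃(b)` formed by the first three columns of `M(b)`. -/
def Mcam3 (b : Fin 7 → ℝ) : Matrix (Fin 3) (Fin 3) ℝ :=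
  (Mcam b).submatrix id Fin.castSucc

/-- The 3×4 matrix `δM(δb)` with rows `(0, δb₁, δb₂, δb₃)`, `(δb₄, δb₅, δb₆, δb₇)`,
`(0, 0, 0, 0)`. -/
def dM (c : Fin 7 → ℝ) : Matrix (Fin 3) (Fin 4) ℝ :=
  !![0, c 0, c 1, c 2; c 3, c 4, c 5, c 6; 0, 0, 0, 0]

/-- `v(b) = (b₂b₅ − b₁b₆, b₆ − b₂b₄, b₁b₄ − b₅)`, the direction of the baseline. -/
def vbase (b : Fin 7 → ℝ) : Fin 3 → ℝ :=
  ![b 1 * b 4 - b 0 * b 5, b 5 - b 1 * b 3, b 0 * b 3 - b 4]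

/-- `(X; 1) ∈ ℝ⁴`, appending a `1` to `X ∈ ℝ³`. -/
def app1 (X : Fin 3 → ℝ) : Fin 4 → ℝ :=
  ![X 0, X 1, X 2, 1]

/-- Matrix-vector multiplication (3×3), viewed on Euclidean space `ℝ³`. -/
noncomputable def mulVecE (R : Matrix (Fin 3) (Fin 3) ℝ) (v : EuclideanSpace ℝ (Fin 3)) :
    EuclideanSpace ℝ (Fin 3) :=
  WithLp.toLp 2 (R.mulVec v)

/-- Matrix-vector multiplication (3×4), landing in Euclidean space `ℝ³`. -/
noncomputable def mulVec4E (M : Matrix (Fin 3) (Fin 4) ℝ) (v : Fin 4 → ℝ) :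
    EuclideanSpace ℝ (Fin 3) :=
  WithLp.toLp 2 (M.mulVec v)

/-- The projection `β(a₁,a₂,a₃) = (a₁/a₃, a₂/a₃)` (junk value when `a₃ = 0`). -/
noncomputable def projE (a : EuclideanSpace ℝ (Fin 3)) : EuclideanSpace ℝ (Fin 2) :=
  (WithLp.toLp 2 ![a 0 / a 2, a 1 / a 2] : EuclideanSpace ℝ (Fin 2))

namespace IllposedAux

noncomputable section

def m1 (b : Fin 7 → ℝ) : Fin 4 → ℝ := ![1, b 0, b 1, 0]
def m2 (b : Fin 7 → ℝ) : Fin 4 → ℝ := ![b 3, b 4, b 5, 0]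
def Pv (b : Fin 7 → ℝ) : Fin 4 → ℝ := ![vbase b 0, vbase b 1, vbase b 2, 0]
def E4 : Fin 4 → ℝ := ![0, 0, 0, 1]
def nv (b : Fin 7 → ℝ) : ℝ := vbase b 0 ^ 2 + vbase b 1 ^ 2 + vbase b 2 ^ 2
def Gm (b : Fin 7 → ℝ) : Matrix (Fin 4) (Fin 4) ℝ :=
  !![1, b 0, b 1, 0; b 3, b 4, b 5, 0; vbase b 0, vbase b 1, vbase b 2, 0; 0, 0, 0, 1]

def S2 (b : Fin 7 → ℝ) (p q : Fin 4 → ℝ) : Matrix (Fin 4) (Fin 4) ℝ :=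
  vecMulVec (m1 b) q + vecMulVec q (m1 b) + vecMulVec (m2 b) p + vecMulVec p (m2 b)

lemma S2_isSymm (b : Fin 7 → ℝ) (p q : Fin 4 → ℝ) : (S2 b p q).IsSymm := by
  ext i j
  simp [S2, vecMulVec, Matrix.transpose_apply, Matrix.add_apply]
  ring

lemma quad_S2 (b : Fin 7 → ℝ) (p q Y : Fin 4 → ℝ) :
    Y ⬝ᵥ (S2 b p q).mulVec Y
      = 2 * ((m1 b ⬝ᵥ Y) * (q ⬝ᵥ Y)) + 2 * ((m2 b ⬝ᵥ Y) * (p ⬝ᵥ Y)) := by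
  simp [S2, vecMulVec, Matrix.mulVec, dotProduct, Fin.sum_univ_four, Matrix.add_apply, m1, m2]
  ring

lemma det_Gm (b : Fin 7 → ℝ) : (Gm b).det = -(nv b) := by
  rw [Matrix.det_succ_column (j := 3)]
  simp [Gm, nv, Fin.sum_univ_succ, Matrix.det_fin_three, vbase, Matrix.submatrix_apply, Fin.succAbove]
  ring

lemma nv_ne_zero {b : Fin 7 → ℝ} (hv : vbase b ≠ 0) : nv b ≠ 0 := by
  have h : ∃ i, vbase b i ≠ 0 := Function.ne_iff.mp hv
  obtain ⟨i, hi⟩ := h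
  have : 0 < nv b := by
    fin_cases i <;> · unfold nv; positivity
  exact ne_of_gt this

lemma m1_dot_Pv (b : Fin 7 → ℝ) : m1 b ⬝ᵥ Pv b = 0 := by
  simp [m1, Pv, dotProduct, Fin.sum_univ_four, vbase]; ring

lemma m2_dot_Pv (b : Fin 7 → ℝ) : m2 b ⬝ᵥ Pv b = 0 := by
  simp [m2, Pv, dotProduct, Fin.sum_univ_four, vbase]; ring

lemma m1_dot_E4 (b : Fin 7 → ℝ) : m1 b ⬝ᵥ E4 = 0 := by
  simp [m1, E4, dotProduct, Fin.sum_univ_four]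

lemma m2_dot_E4 (b : Fin 7 → ℝ) : m2 b ⬝ᵥ E4 = 0 := by
  simp [m2, E4, dotProduct, Fin.sum_univ_four]

end

end IllposedAux

namespace IllposedAux

noncomputable section
variable {b : Fin 7 → ℝ}

lemma isUnit_det_Gm (hv : vbase b ≠ 0) : IsUnit (Gm b).det := by
  rw [det_Gm]
  simpa [isUnit_iff_ne_zero, neg_eq_zero] using nv_ne_zero hv

lemma Gm_mulVec_Pv : (Gm b).mulVec (Pv b) = ![0, 0, nv b, 0] := by
  funext i
  fin_cases i <;>
    simp [Gm, Pv, nv, Matrix.mulVec, dotProduct, Fin.sum_univ_four, vbase] <;> ring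

lemma Gm_mulVec_E4 : (Gm b).mulVec E4 = E4 := by
  funext i
  fin_cases i <;> simp [Gm, E4, Matrix.mulVec, dotProduct, Fin.sum_univ_four]

lemma Gt_mulVec_e0 : (Gm b)ᵀ.mulVec ![1, 0, 0, 0] = m1 b := by
  funext i
  fin_cases i <;> simp [Gm, m1, Matrix.mulVec, dotProduct, Fin.sum_univ_four]

lemma Gt_mulVec_e1 : (Gm b)ᵀ.mulVec ![0, 1, 0, 0] = m2 b := by
  funext i
  fin_cases i <;> simp [Gm, m2, Matrix.mulVec, dotProduct, Fin.sum_univ_four]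

lemma conj_vecMulVec (A : Matrix (Fin 4) (Fin 4) ℝ) (u w : Fin 4 → ℝ) :
    Aᵀ * vecMulVec u w * A = vecMulVec (Aᵀ.mulVec u) (Aᵀ.mulVec w) := by
  ext i j
  simp [Matrix.mul_apply, vecMulVec, Matrix.mulVec, dotProduct, Fin.sum_univ_four]
  ring

lemma conj_entry (A Q : Matrix (Fin 4) (Fin 4) ℝ) (i j : Fin 4) :
    (Aᵀ * Q * A) i j = (fun k => A k i) ⬝ᵥ Q.mulVec (fun k => A k j) := by
  simp [Matrix.mul_apply, Matrix.mulVec, dotProduct, Fin.sum_univ_four]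
  ring

lemma inv_col2 (hv : vbase b ≠ 0) : (fun k => (Gm b)⁻¹ k 2) = (nv b)⁻¹ • Pv b := by
  have h := congrArg (fun w => (Gm b)⁻¹.mulVec w) (Gm_mulVec_Pv (b:=b))
  simp only [Matrix.mulVec_mulVec, Matrix.nonsing_inv_mul _ (isUnit_det_Gm hv),
    Matrix.one_mulVec] at h
  funext k
  have hk := congrFun h.symm k
  simp [Matrix.mulVec, dotProduct, Fin.sum_univ_four] at hk
  have hnv := nv_ne_zero hv
  simp only [Pi.smul_apply, smul_eq_mul]
  rw [← hk]
  field_simp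

lemma inv_col3 (hv : vbase b ≠ 0) : (fun k => (Gm b)⁻¹ k 3) = E4 := by
  have h := congrArg (fun w => (Gm b)⁻¹.mulVec w) (Gm_mulVec_E4 (b:=b))
  simp only [Matrix.mulVec_mulVec, Matrix.nonsing_inv_mul _ (isUnit_det_Gm hv),
    Matrix.one_mulVec] at h
  funext k
  have hk := congrFun h k
  simpa [Matrix.mulVec, dotProduct, Fin.sum_univ_four, E4] using hk.symm

end

end IllposedAux

namespace IllposedAux

noncomputable section
variable {b : Fin 7 → ℝ}

lemma sym_block_decomp (R : Matrix (Fin 4) (Fin 4) ℝ) (hsR : ∀ i j, R j i = R i j)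
    (h22 : R 2 2 = 0) (h23 : R 2 3 = 0) (h33 : R 3 3 = 0) :
    R = vecMulVec ![1,0,0,0] ![R 0 0 / 2, 0, R 0 2, R 0 3]
      + vecMulVec ![R 0 0 / 2, 0, R 0 2, R 0 3] ![1,0,0,0]
      + vecMulVec ![0,1,0,0] ![R 0 1, R 1 1 / 2, R 1 2, R 1 3]
      + vecMulVec ![R 0 1, R 1 1 / 2, R 1 2, R 1 3] ![0,1,0,0] := by
  ext i j
  fin_cases i <;> fin_cases j <;>
    simp [vecMulVec, Matrix.add_apply, Matrix.vecHead, Matrix.vecTail, Function.comp] <;>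
    linarith [hsR 0 1, hsR 0 2, hsR 0 3, hsR 1 2, hsR 1 3, hsR 2 3, h22, h23, h33]

lemma sym_block_zero (q' p' : Fin 4 → ℝ)
    (h : vecMulVec ![1,0,0,0] q' + vecMulVec q' ![1,0,0,0]
      + vecMulVec ![0,1,0,0] p' + vecMulVec p' ![0,1,0,0] = 0) :
    ∃ t : ℝ, q' = ![0, t, 0, 0] ∧ p' = ![-t, 0, 0, 0] := by
  have entry : ∀ i j : Fin 4,
      (![1,0,0,0] : Fin 4 → ℝ) i * q' j + q' i * ![1,0,0,0] j
        + (![0,1,0,0] : Fin 4 → ℝ) i * p' j + p' i * ![0,1,0,0] j = 0 := by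
    intro i j
    have := congrFun (congrFun h i) j
    simpa [vecMulVec, Matrix.add_apply] using this
  refine ⟨q' 1, ?_, ?_⟩
  · funext k
    fin_cases k
    · have := entry 0 0; simp at this ⊢; linarith
    · simp
    · have := entry 0 2; simp at this ⊢; linarith
    · have := entry 0 3; simp at this ⊢; linarith
  · funext k
    fin_cases k
    · have := entry 0 1; simp at this ⊢; linarith
    · have := entry 1 1; simp at this ⊢; linarith
    · have := entry 1 2; simp at this ⊢; linarith
    · have := entry 1 3; simp at this ⊢; linarith

end

end IllposedAux

namespace IllposedAux

noncomputable section
variable {b : Fin 7 → ℝ}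

lemma decomp (hv : vbase b ≠ 0) (Q : Matrix (Fin 4) (Fin 4) ℝ) (hs : Q.IsSymm)
    (h1 : Pv b ⬝ᵥ Q.mulVec (Pv b) = 0) (h2 : Pv b ⬝ᵥ Q.mulVec E4 = 0)
    (h3 : E4 ⬝ᵥ Q.mulVec E4 = 0) :
    ∃ p q : Fin 4 → ℝ, p 0 = 0 ∧ Q = S2 b p q := by
  have hd : IsUnit (Gm b).det := isUnit_det_Gm hv
  have e1 : (Gm b)⁻¹ * Gm b = 1 := Matrix.nonsing_inv_mul _ hd
  have e2 : (Gm b)ᵀ * ((Gm b)⁻¹)ᵀ = 1 := by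
    rw [← Matrix.transpose_mul, e1, Matrix.transpose_one]
  have hGR : (Gm b)ᵀ * (((Gm b)⁻¹)ᵀ * Q * (Gm b)⁻¹) * Gm b = Q := by
    calc (Gm b)ᵀ * (((Gm b)⁻¹)ᵀ * Q * (Gm b)⁻¹) * Gm b
        = (Gm b)ᵀ * ((Gm b)⁻¹)ᵀ * Q * ((Gm b)⁻¹ * Gm b) := by
          simp only [Matrix.mul_assoc]
      _ = Q := by rw [e1, e2, Matrix.one_mul, Matrix.mul_one]
  have hcol2 : (fun k => (Gm b)⁻¹ k 2) = (nv b)⁻¹ • Pv b := inv_col2 hv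
  have hcol3 : (fun k => (Gm b)⁻¹ k 3) = E4 := inv_col3 hv
  have hR22 : (((Gm b)⁻¹)ᵀ * Q * (Gm b)⁻¹) 2 2 = 0 := by
    rw [conj_entry, hcol2]
    simp [Matrix.mulVec_smul, dotProduct_smul, smul_dotProduct, h1]
  have hR23 : (((Gm b)⁻¹)ᵀ * Q * (Gm b)⁻¹) 2 3 = 0 := by
    rw [conj_entry, hcol2, hcol3]
    simp [Matrix.mulVec_smul, dotProduct_smul, smul_dotProduct, h2]
  have hR33 : (((Gm b)⁻¹)ᵀ * Q * (Gm b)⁻¹) 3 3 = 0 := by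
    rw [conj_entry, hcol3]
    simp [h3]
  have hsR : ∀ i j : Fin 4, (((Gm b)⁻¹)ᵀ * Q * (Gm b)⁻¹) j i
      = (((Gm b)⁻¹)ᵀ * Q * (Gm b)⁻¹) i j := by
    intro i j
    have hT : (((Gm b)⁻¹)ᵀ * Q * (Gm b)⁻¹)ᵀ = ((Gm b)⁻¹)ᵀ * Q * (Gm b)⁻¹ := by
      rw [Matrix.transpose_mul, Matrix.transpose_mul, Matrix.transpose_transpose,
        hs, Matrix.mul_assoc]
    simpa using congrFun (congrFun hT i) j
  have hRdec := sym_block_decomp (((Gm b)⁻¹)ᵀ * Q * (Gm b)⁻¹) hsR hR22 hR23 hR33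
  set R := ((Gm b)⁻¹)ᵀ * Q * (Gm b)⁻¹ with hRdef
  set q' : Fin 4 → ℝ := ![R 0 0 / 2, 0, R 0 2, R 0 3] with hq'
  set p' : Fin 4 → ℝ := ![R 0 1, R 1 1 / 2, R 1 2, R 1 3] with hp'
  refine ⟨(Gm b)ᵀ.mulVec p' - ((Gm b)ᵀ.mulVec p') 0 • m1 b,
          (Gm b)ᵀ.mulVec q' + ((Gm b)ᵀ.mulVec p') 0 • m2 b, ?_, ?_⟩
  · simp [m1]
  · have hQ : Q = S2 b ((Gm b)ᵀ.mulVec p') ((Gm b)ᵀ.mulVec q') := by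
      conv_lhs => rw [← hGR, hRdec]
      simp only [Matrix.add_mul, Matrix.mul_add, conj_vecMulVec, Gt_mulVec_e0, Gt_mulVec_e1]
      rw [S2]
      try abel
    rw [hQ]
    ext i j
    simp only [S2, vecMulVec, Matrix.add_apply, Matrix.of_apply, Pi.sub_apply, Pi.add_apply,
      Pi.smul_apply, smul_eq_mul]
    ring

lemma S2_inj (hv : vbase b ≠ 0) {p q : Fin 4 → ℝ} (hp0 : p 0 = 0) (h : S2 b p q = 0) :
    p = 0 ∧ q = 0 := by
  have hd : IsUnit (Gm b).det := isUnit_det_Gm hv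
  have e1 : (Gm b)⁻¹ * Gm b = 1 := Matrix.nonsing_inv_mul _ hd
  have e1' : Gm b * (Gm b)⁻¹ = 1 := Matrix.mul_nonsing_inv _ hd
  have e2 : (Gm b)ᵀ * ((Gm b)⁻¹)ᵀ = 1 := by
    rw [← Matrix.transpose_mul, e1, Matrix.transpose_one]
  have e2' : ((Gm b)⁻¹)ᵀ * (Gm b)ᵀ = 1 := by
    rw [← Matrix.transpose_mul, e1', Matrix.transpose_one]
  have hq : q = (Gm b)ᵀ.mulVec (((Gm b)⁻¹)ᵀ.mulVec q) := by
    rw [Matrix.mulVec_mulVec, e2, Matrix.one_mulVec]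
  have hp : p = (Gm b)ᵀ.mulVec (((Gm b)⁻¹)ᵀ.mulVec p) := by
    rw [Matrix.mulVec_mulVec, e2, Matrix.one_mulVec]
  have hm1 : ((Gm b)⁻¹)ᵀ.mulVec (m1 b) = ![1,0,0,0] := by
    rw [← Gt_mulVec_e0 (b := b), Matrix.mulVec_mulVec, e2', Matrix.one_mulVec]
  have hm2 : ((Gm b)⁻¹)ᵀ.mulVec (m2 b) = ![0,1,0,0] := by
    rw [← Gt_mulVec_e1 (b := b), Matrix.mulVec_mulVec, e2', Matrix.one_mulVec]
  have hzero : vecMulVec ![1,0,0,0] (((Gm b)⁻¹)ᵀ.mulVec q)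
      + vecMulVec (((Gm b)⁻¹)ᵀ.mulVec q) ![1,0,0,0]
      + vecMulVec ![0,1,0,0] (((Gm b)⁻¹)ᵀ.mulVec p)
      + vecMulVec (((Gm b)⁻¹)ᵀ.mulVec p) ![0,1,0,0] = 0 := by
    have hz : ((Gm b)⁻¹)ᵀ * (S2 b p q) * (Gm b)⁻¹ = 0 := by rw [h]; simp
    rw [S2] at hz
    simp only [Matrix.add_mul, Matrix.mul_add, conj_vecMulVec, hm1, hm2] at hz
    exact hz
  obtain ⟨t, hqt, hpt⟩ := sym_block_zero _ _ hzero
  have hqv : q = t • m2 b := by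
    rw [hq, hqt]
    have : (![0, t, 0, 0] : Fin 4 → ℝ) = t • ![0,1,0,0] := by
      funext k; fin_cases k <;> simp
    rw [this, Matrix.mulVec_smul, Gt_mulVec_e1]
  have hpv : p = (-t) • m1 b := by
    rw [hp, hpt]
    have : (![-t, 0, 0, 0] : Fin 4 → ℝ) = (-t) • ![1,0,0,0] := by
      funext k; fin_cases k <;> simp
    rw [this, Matrix.mulVec_smul, Gt_mulVec_e0]
  have ht : t = 0 := by
    have := congrFun hpv 0
    rw [hp0] at this
    simp [m1] at this
    linarith
  constructor
  · rw [hpv, ht]; simp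
  · rw [hqv, ht]; simp

end

end IllposedAux


namespace IllposedAux
noncomputable section
variable {b : Fin 7 → ℝ}

lemma sym_dot {Q : Matrix (Fin 4) (Fin 4) ℝ} (hs : Q.IsSymm) (x y : Fin 4 → ℝ) :
    x ⬝ᵥ Q.mulVec y = y ⬝ᵥ Q.mulVec x := by
  rw [Matrix.dotProduct_mulVec, ← Matrix.mulVec_transpose, hs, dotProduct_comm]

lemma quad_expand (Q : Matrix (Fin 4) (Fin 4) ℝ) (P E : Fin 4 → ℝ) (s : ℝ) :
    (s • P + E) ⬝ᵥ Q.mulVec (s • P + E)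
      = s * s * (P ⬝ᵥ Q.mulVec P) + s * (P ⬝ᵥ Q.mulVec E)
        + s * (E ⬝ᵥ Q.mulVec P) + E ⬝ᵥ Q.mulVec E := by
  simp [Matrix.mulVec, dotProduct, Fin.sum_univ_four, Pi.add_apply, Pi.smul_apply, smul_eq_mul]
  ring

lemma baseline_three {Q : Matrix (Fin 4) (Fin 4) ℝ} (hs : Q.IsSymm) (P E : Fin 4 → ℝ)
    (h : ∀ s : ℝ, (s • P + E) ⬝ᵥ Q.mulVec (s • P + E) = 0) :
    P ⬝ᵥ Q.mulVec P = 0 ∧ P ⬝ᵥ Q.mulVec E = 0 ∧ E ⬝ᵥ Q.mulVec E = 0 := by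
  have h0 := h 0; rw [quad_expand] at h0
  have h1 := h 1; rw [quad_expand] at h1
  have h2 := h (-1); rw [quad_expand] at h2
  have hsym : E ⬝ᵥ Q.mulVec P = P ⬝ᵥ Q.mulVec E := sym_dot hs E P
  rw [hsym] at h1 h2
  refine ⟨by linarith, by linarith, by linarith⟩

end
end IllposedAux

namespace IllposedAux
noncomputable section
variable {b : Fin 7 → ℝ}

def pext (u : Fin 3 → ℝ) : Fin 4 → ℝ := ![0, u 0, u 1, u 2]

lemma pext_add (u u' : Fin 3 → ℝ) : pext (u + u') = pext u + pext u' := by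
  funext k; fin_cases k <;> simp [pext]

lemma pext_smul (t : ℝ) (u : Fin 3 → ℝ) : pext (t • u) = t • pext u := by
  funext k; fin_cases k <;> simp [pext]

/-- If `m₁ ⬝ Y = m₂ ⬝ Y = 0` and `Y 3 = 1` then `Y` lies on the baseline. -/
lemma on_baseline (hv : vbase b ≠ 0) {Y : Fin 4 → ℝ} (h1 : m1 b ⬝ᵥ Y = 0)
    (h2 : m2 b ⬝ᵥ Y = 0) (h3 : Y 3 = 1) : ∃ s : ℝ, Y = s • Pv b + E4 := by
  have hd : IsUnit (Gm b).det := isUnit_det_Gm hv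
  have e1 : (Gm b)⁻¹ * Gm b = 1 := Matrix.nonsing_inv_mul _ hd
  have hGY : (Gm b).mulVec Y = (Pv b ⬝ᵥ Y) • ![0,0,1,0] + E4 := by
    funext k
    fin_cases k <;>
      simp [Gm, Matrix.mulVec, dotProduct, Fin.sum_univ_four, E4, Pv, m1, m2] at h1 h2 ⊢ <;>
      linarith [h1, h2, h3]
  have hY : Y = (Gm b)⁻¹.mulVec ((Gm b).mulVec Y) := by
    rw [Matrix.mulVec_mulVec, e1, Matrix.one_mulVec]
  rw [hGY] at hY
  rw [Matrix.mulVec_add, Matrix.mulVec_smul] at hY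
  have hb2 : (Gm b)⁻¹.mulVec ![0,0,1,0] = (nv b)⁻¹ • Pv b := by
    rw [← inv_col2 hv]
    funext k
    simp [Matrix.mulVec, dotProduct, Fin.sum_univ_four]
  have hb3 : (Gm b)⁻¹.mulVec E4 = E4 := by
    funext k
    have hk := congrFun (inv_col3 hv) k
    simpa [Matrix.mulVec, dotProduct, Fin.sum_univ_four, E4] using hk
  rw [hb2, hb3, smul_smul] at hY
  exact ⟨_, hY⟩

end
end IllposedAux

namespace IllposedAux
noncomputable section
variable {b : Fin 7 → ℝ}

lemma S2_zero : S2 b 0 0 = 0 := by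
  ext i j; simp [S2, vecMulVec]

lemma S2_baseline (p q : Fin 4 → ℝ) (s : ℝ) :
    (s • Pv b + E4) ⬝ᵥ (S2 b p q).mulVec (s • Pv b + E4) = 0 := by
  rw [quad_S2]
  have h1 : m1 b ⬝ᵥ (s • Pv b + E4) = 0 := by
    rw [dotProduct_add, dotProduct_smul, m1_dot_Pv, m1_dot_E4]; simp
  have h2 : m2 b ⬝ᵥ (s • Pv b + E4) = 0 := by
    rw [dotProduct_add, dotProduct_smul, m2_dot_Pv, m2_dot_E4]; simp
  rw [h1, h2]; ring

lemma pext_eq_zero {u : Fin 3 → ℝ} (h : pext u = 0) : u = 0 := by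
  funext j
  fin_cases j
  · simpa [pext] using congrFun h 1
  · simpa [pext] using congrFun h 2
  · simpa [pext] using congrFun h 3

lemma exists_pq_six (b : Fin 7 → ℝ) (Y : Fin 7 → Fin 4 → ℝ) (i : Fin 7) :
    ∃ p q : Fin 4 → ℝ, p 0 = 0 ∧ ¬(p = 0 ∧ q = 0) ∧
      ∀ k : Fin 6, (m1 b ⬝ᵥ Y (i.succAbove k)) * (q ⬝ᵥ Y (i.succAbove k))
        + (m2 b ⬝ᵥ Y (i.succAbove k)) * (p ⬝ᵥ Y (i.succAbove k)) = 0 := by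
  let F : ((Fin 3 → ℝ) × (Fin 4 → ℝ)) →ₗ[ℝ] (Fin 6 → ℝ) :=
    { toFun := fun uq k => (m1 b ⬝ᵥ Y (i.succAbove k)) * (uq.2 ⬝ᵥ Y (i.succAbove k))
        + (m2 b ⬝ᵥ Y (i.succAbove k)) * (pext uq.1 ⬝ᵥ Y (i.succAbove k)),
      map_add' := by
        intro x y
        funext k
        simp only [Prod.fst_add, Prod.snd_add, pext_add, add_dotProduct, Pi.add_apply]
        ring
      map_smul' := by
        intro t x
        funext k
        simp only [Prod.smul_fst, Prod.smul_snd, pext_smul, smul_dotProduct, Pi.smul_apply,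
          smul_eq_mul, RingHom.id_apply]
        ring }
  have hnotinj : ¬ Function.Injective F := by
    intro hinj
    have hle := LinearMap.finrank_le_finrank_of_injective hinj
    simp [Module.finrank_prod] at hle
  obtain ⟨x, y, hxy, hne⟩ := Function.not_injective_iff.mp hnotinj
  have hker : F (x - y) = 0 := by rw [map_sub, hxy, sub_self]
  refine ⟨pext (x.1 - y.1), x.2 - y.2, by simp [pext], ?_, ?_⟩
  · rintro ⟨hp, hq⟩
    apply hne
    have h1 : x.1 = y.1 := by
      have := pext_eq_zero hp
      exact sub_eq_zero.mp this
    have h2 : x.2 = y.2 := sub_eq_zero.mp hq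
    exact Prod.ext h1 h2
  · intro k
    have := congrFun hker k
    simpa [F] using this

end
end IllposedAux

namespace IllposedAux
noncomputable section
variable {b : Fin 7 → ℝ}

lemma dot_d1_neg (c : Fin 7 → ℝ) (Y : Fin 4 → ℝ) :
    (![0, -c 0, -c 1, -c 2] : Fin 4 → ℝ) ⬝ᵥ Y = -((![0, c 0, c 1, c 2] : Fin 4 → ℝ) ⬝ᵥ Y) := by
  simp [dotProduct, Fin.sum_univ_four]; ring

lemma kern_iff (hv : vbase b ≠ 0) (Y : Fin 7 → Fin 4 → ℝ) (hY3 : ∀ i, Y i 3 = 1) :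
    (∃ (lam : Fin 7 → ℝ) (c : Fin 7 → ℝ), ¬(lam = 0 ∧ c = 0) ∧
      ∀ i, lam i * (m1 b ⬝ᵥ Y i) + ![0, c 0, c 1, c 2] ⬝ᵥ Y i = 0 ∧
           lam i * (m2 b ⬝ᵥ Y i) + ![c 3, c 4, c 5, c 6] ⬝ᵥ Y i = 0) ↔
    (∃ Q : Matrix (Fin 4) (Fin 4) ℝ, Q.IsSymm ∧ Q ≠ 0 ∧
      (∀ i, Y i ⬝ᵥ Q.mulVec (Y i) = 0) ∧
      (∀ s : ℝ, (s • Pv b + E4) ⬝ᵥ Q.mulVec (s • Pv b + E4) = 0)) := by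
  constructor
  · rintro ⟨lam, c, hne, heq⟩
    by_cases hdeg : ∃ i, m1 b ⬝ᵥ Y i = 0 ∧ m2 b ⬝ᵥ Y i = 0
    · -- degenerate case: some world point on the baseline
      obtain ⟨i, hai, hbi⟩ := hdeg
      obtain ⟨p, q, hp0, hpq, hsix⟩ := exists_pq_six b Y i
      refine ⟨S2 b p q, S2_isSymm b p q, ?_, ?_, S2_baseline p q⟩
      · intro h0; exact hpq (S2_inj hv hp0 h0)
      · intro j
        rcases eq_or_ne j i with rfl | hji
        · obtain ⟨s, hYs⟩ := on_baseline hv hai hbi (hY3 j)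
          rw [hYs]
          exact S2_baseline p q s
        · obtain ⟨k, hk⟩ := (Fin.exists_succAbove_eq hji)
          rw [quad_S2]
          have := hsix k
          rw [hk] at this
          linarith
    · -- nondegenerate: use the kernel element itself
      refine ⟨S2 b ![0, -c 0, -c 1, -c 2] ![c 3, c 4, c 5, c 6],
        S2_isSymm b _ _, ?_, ?_, S2_baseline _ _⟩
      · intro h0
        obtain ⟨hp, hq⟩ := S2_inj hv (by simp) h0
        have hc : c = 0 := by
          funext j
          fin_cases j
          · simpa using congrFun hp 1
          · simpa using congrFun hp 2
          · simpa using congrFun hp 3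
          · simpa using congrFun hq 0
          · simpa using congrFun hq 1
          · simpa using congrFun hq 2
          · simpa using congrFun hq 3
        have hlam : lam ≠ 0 := fun hl => hne ⟨hl, hc⟩
        obtain ⟨i, hli⟩ := Function.ne_iff.mp hlam
        have h1 := (heq i).1
        have h2 := (heq i).2
        rw [hc] at h1 h2
        simp only [Pi.zero_apply] at h1 h2
        have hz : (![0, (0:ℝ), 0, 0] : Fin 4 → ℝ) ⬝ᵥ Y i = 0 := by
          simp [dotProduct, Fin.sum_univ_four]
        rw [hz] at h1 h2
        simp only [Pi.zero_apply, add_zero] at h1 h2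
        exact hdeg ⟨i, by
          rcases mul_eq_zero.mp h1 with h | h
          · exact absurd h hli
          · rcases mul_eq_zero.mp h2 with h' | h'
            · exact absurd h' hli
            · exact ⟨h, h'⟩⟩
      · intro i
        rw [quad_S2, dot_d1_neg]
        have h1 := (heq i).1
        have h2 := (heq i).2
        linear_combination 2 * (m1 b ⬝ᵥ Y i) * h2 - 2 * (m2 b ⬝ᵥ Y i) * h1
  · rintro ⟨Q, hs, hQne, hpts, hline⟩
    obtain ⟨hPP, hPE, hEE⟩ := baseline_three hs _ _ hline
    by_cases hdeg : ∃ i, m1 b ⬝ᵥ Y i = 0 ∧ m2 b ⬝ᵥ Y i = 0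
    · obtain ⟨i, hai, hbi⟩ := hdeg
      refine ⟨Pi.single i 1, 0, ?_, ?_⟩
      · rintro ⟨hl, -⟩
        have := congrFun hl i
        simp [Pi.single_apply] at this
      · intro j
        have hz : ∀ Z : Fin 4 → ℝ,
            (![0, (0 : Fin 7 → ℝ) 0, (0 : Fin 7 → ℝ) 1, (0 : Fin 7 → ℝ) 2] : Fin 4 → ℝ) ⬝ᵥ Z = 0
            ∧ (![(0 : Fin 7 → ℝ) 3, (0 : Fin 7 → ℝ) 4, (0 : Fin 7 → ℝ) 5, (0 : Fin 7 → ℝ) 6] :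
                Fin 4 → ℝ) ⬝ᵥ Z = 0 := by
          intro Z
          constructor <;> simp [dotProduct, Fin.sum_univ_four]
        rcases eq_or_ne j i with rfl | hji
        · rw [(hz (Y j)).1, (hz (Y j)).2]
          constructor <;> simp [Pi.single_apply, hai, hbi]
        · rw [(hz (Y j)).1, (hz (Y j)).2]
          constructor <;> simp [Pi.single_apply, hji]
    · push_neg at hdeg
      obtain ⟨p, q, hp0, hQdec⟩ := decomp hv Q hs hPP hPE hEE
      refine ⟨fun i => if m1 b ⬝ᵥ Y i = 0 then -(q ⬝ᵥ Y i) / (m2 b ⬝ᵥ Y i)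
          else (p ⬝ᵥ Y i) / (m1 b ⬝ᵥ Y i),
        ![-p 1, -p 2, -p 3, q 0, q 1, q 2, q 3], ?_, ?_⟩
      · rintro ⟨-, hc0⟩
        apply hQne
        have hcomp : ∀ k : Fin 7, (![-p 1, -p 2, -p 3, q 0, q 1, q 2, q 3] : Fin 7 → ℝ) k = 0 :=
          fun k => congrFun hc0 k
        have hp' : p = 0 := by
          funext k
          fin_cases k
          · exact hp0
          · have := hcomp 0; simp at this; exact this
          · have := hcomp 1; simp at this; exact this
          · have := hcomp 2; simp at this; exact this
        have hq' : q = 0 := by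
          funext k
          fin_cases k
          · have := hcomp 3; simpa using this
          · have := hcomp 4; simpa using this
          · have := hcomp 5; simpa using this
          · have := hcomp 6; simpa using this
        rw [hQdec, hp', hq', S2_zero]
      · intro i
        have hd1 : (![(![-p 1, -p 2, -p 3, q 0, q 1, q 2, q 3] : Fin 7 → ℝ) 0,
              (![-p 1, -p 2, -p 3, q 0, q 1, q 2, q 3] : Fin 7 → ℝ) 1,
              (![-p 1, -p 2, -p 3, q 0, q 1, q 2, q 3] : Fin 7 → ℝ) 2] : Fin 3 → ℝ) = 0
            → True := fun _ => trivial
        have e1 : (![0, (![-p 1, -p 2, -p 3, q 0, q 1, q 2, q 3] : Fin 7 → ℝ) 0,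
              (![-p 1, -p 2, -p 3, q 0, q 1, q 2, q 3] : Fin 7 → ℝ) 1,
              (![-p 1, -p 2, -p 3, q 0, q 1, q 2, q 3] : Fin 7 → ℝ) 2] : Fin 4 → ℝ) ⬝ᵥ Y i
            = -(p ⬝ᵥ Y i) := by
          show (![0, -p 1, -p 2, -p 3] : Fin 4 → ℝ) ⬝ᵥ Y i = -(p ⬝ᵥ Y i)
          simp [dotProduct, Fin.sum_univ_four]
          linear_combination (Y i 0) * hp0
        have e2 : (![(![-p 1, -p 2, -p 3, q 0, q 1, q 2, q 3] : Fin 7 → ℝ) 3,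
              (![-p 1, -p 2, -p 3, q 0, q 1, q 2, q 3] : Fin 7 → ℝ) 4,
              (![-p 1, -p 2, -p 3, q 0, q 1, q 2, q 3] : Fin 7 → ℝ) 5,
              (![-p 1, -p 2, -p 3, q 0, q 1, q 2, q 3] : Fin 7 → ℝ) 6] : Fin 4 → ℝ) ⬝ᵥ Y i
            = q ⬝ᵥ Y i := by
          show (![q 0, q 1, q 2, q 3] : Fin 4 → ℝ) ⬝ᵥ Y i = q ⬝ᵥ Y i
          simp [dotProduct, Fin.sum_univ_four]
        rw [e1, e2]
        have hpt : (m1 b ⬝ᵥ Y i) * (q ⬝ᵥ Y i) + (m2 b ⬝ᵥ Y i) * (p ⬝ᵥ Y i) = 0 := by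
          have := hpts i
          rw [hQdec, quad_S2] at this
          linarith
        rcases eq_or_ne (m1 b ⬝ᵥ Y i) 0 with ha | ha
        · have hb : m2 b ⬝ᵥ Y i ≠ 0 := fun hb' => hdeg i ha hb'
          have hpY : p ⬝ᵥ Y i = 0 := by
            rw [ha] at hpt
            simp at hpt
            rcases hpt with h | h
            · exact absurd h hb
            · exact h
          simp only [if_pos ha]
          constructor
          · rw [ha, hpY]; ring
          · field_simp
            ring
        · simp only [if_neg ha]
          constructor
          · field_simp
            ring
          · field_simp
            linarith [hpt]
end
end IllposedAux

namespace IllposedAux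
noncomputable section

def D0 (a : EuclideanSpace ℝ (Fin 3)) : EuclideanSpace ℝ (Fin 3) →L[ℝ] ℝ :=
  (a 2)⁻¹ • EuclideanSpace.proj 0 - (a 0 / a 2 ^ 2) • EuclideanSpace.proj 2

def D1 (a : EuclideanSpace ℝ (Fin 3)) : EuclideanSpace ℝ (Fin 3) →L[ℝ] ℝ :=
  (a 2)⁻¹ • EuclideanSpace.proj 1 - (a 1 / a 2 ^ 2) • EuclideanSpace.proj 2

def Dproj (a : EuclideanSpace ℝ (Fin 3)) :
    EuclideanSpace ℝ (Fin 3) →L[ℝ] EuclideanSpace ℝ (Fin 2) :=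
  ((EuclideanSpace.equiv (Fin 2) ℝ).symm : (Fin 2 → ℝ) ≃L[ℝ] EuclideanSpace ℝ (Fin 2)).toContinuousLinearMap.comp
    (ContinuousLinearMap.pi ![D0 a, D1 a])

lemma hasFDerivAt_projE (a : EuclideanSpace ℝ (Fin 3)) (ha : a 2 ≠ 0) :
    HasFDerivAt projE (Dproj a) a := by
  have hp0 : HasFDerivAt (fun x : EuclideanSpace ℝ (Fin 3) => x 0)
      (EuclideanSpace.proj (0 : Fin 3) : EuclideanSpace ℝ (Fin 3) →L[ℝ] ℝ) a := by
    exact (EuclideanSpace.proj (0 : Fin 3) : EuclideanSpace ℝ (Fin 3) →L[ℝ] ℝ).hasFDerivAt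
  have hp1 : HasFDerivAt (fun x : EuclideanSpace ℝ (Fin 3) => x 1)
      (EuclideanSpace.proj (1 : Fin 3) : EuclideanSpace ℝ (Fin 3) →L[ℝ] ℝ) a := by
    exact (EuclideanSpace.proj (1 : Fin 3) : EuclideanSpace ℝ (Fin 3) →L[ℝ] ℝ).hasFDerivAt
  have hp2 : HasFDerivAt (fun x : EuclideanSpace ℝ (Fin 3) => x 2)
      (EuclideanSpace.proj (2 : Fin 3) : EuclideanSpace ℝ (Fin 3) →L[ℝ] ℝ) a := by
    exact (EuclideanSpace.proj (2 : Fin 3) : EuclideanSpace ℝ (Fin 3) →L[ℝ] ℝ).hasFDerivAt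
  have hinv : HasFDerivAt (fun x : EuclideanSpace ℝ (Fin 3) => (x 2)⁻¹)
      ((-((a 2)⁻¹ * (a 2)⁻¹)) • (EuclideanSpace.proj (2 : Fin 3) :
        EuclideanSpace ℝ (Fin 3) →L[ℝ] ℝ)) a := by
    have h := (hasFDerivAt_inv' (𝕜 := ℝ) (R := ℝ) ha).comp a hp2
    refine h.congr_fderiv ?_
    ext u
    simp [ContinuousLinearMap.mulLeftRight_apply]
    ring
  have h0 : HasFDerivAt (fun x : EuclideanSpace ℝ (Fin 3) => x 0 / x 2) (D0 a) a := by
    have h := hp0.mul hinv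
    have h' : HasFDerivAt (fun x : EuclideanSpace ℝ (Fin 3) => x 0 * (x 2)⁻¹)
        (D0 a) a := by
      refine h.congr_fderiv ?_
      ext u
      simp [D0]
      field_simp
      ring
    refine h'.congr_of_eventuallyEq ?_
    exact Filter.Eventually.of_forall (fun y => (div_eq_mul_inv _ _))
  have h1 : HasFDerivAt (fun x : EuclideanSpace ℝ (Fin 3) => x 1 / x 2) (D1 a) a := by
    have h := hp1.mul hinv
    have h' : HasFDerivAt (fun x : EuclideanSpace ℝ (Fin 3) => x 1 * (x 2)⁻¹)
        (D1 a) a := by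
      refine h.congr_fderiv ?_
      ext u
      simp [D1]
      field_simp
      ring
    refine h'.congr_of_eventuallyEq ?_
    exact Filter.Eventually.of_forall (fun y => (div_eq_mul_inv _ _))
  have hg : HasFDerivAt (fun x : EuclideanSpace ℝ (Fin 3) => (![x 0 / x 2, x 1 / x 2] : Fin 2 → ℝ))
      (ContinuousLinearMap.pi ![D0 a, D1 a]) a := by
    rw [hasFDerivAt_pi']
    intro i
    fin_cases i
    · simpa [ContinuousLinearMap.proj_pi] using h0
    · simpa [ContinuousLinearMap.proj_pi] using h1
  exact (((EuclideanSpace.equiv (Fin 2) ℝ).symm :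
    (Fin 2 → ℝ) ≃L[ℝ] EuclideanSpace ℝ (Fin 2)).hasFDerivAt).comp a hg

lemma fderiv_projE_zero_iff (a : EuclideanSpace ℝ (Fin 3)) (ha : a 2 ≠ 0)
    (u : EuclideanSpace ℝ (Fin 3)) :
    fderiv ℝ projE a u = 0 ↔
      (u 0 * a 2 - a 0 * u 2 = 0 ∧ u 1 * a 2 - a 1 * u 2 = 0) := by
  rw [(hasFDerivAt_projE a ha).fderiv]
  have hv0 : Dproj a u 0 = (a 2)⁻¹ * u 0 - a 0 / a 2 ^ 2 * u 2 := rfl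
  have hv1 : Dproj a u 1 = (a 2)⁻¹ * u 1 - a 1 / a 2 ^ 2 * u 2 := rfl
  constructor
  · intro h
    have h0 := congrFun (congrArg WithLp.ofLp h) 0
    have h1 := congrFun (congrArg WithLp.ofLp h) 1
    rw [hv0] at h0
    rw [hv1] at h1
    simp only [WithLp.ofLp_zero, Pi.zero_apply] at h0 h1
    constructor
    · field_simp at h0
      have hz : a 2 * (u 0 * a 2 - a 0 * u 2) = 0 := by linear_combination a 2 * h0
      exact (mul_eq_zero.mp hz).resolve_left ha
    · field_simp at h1
      have hz : a 2 * (u 1 * a 2 - a 1 * u 2) = 0 := by linear_combination a 2 * h1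
      exact (mul_eq_zero.mp hz).resolve_left ha
  · rintro ⟨h0, h1⟩
    ext k
    fin_cases k
    · show Dproj a u 0 = 0
      rw [hv0]
      field_simp
      linear_combination h0
    · show Dproj a u 1 = 0
      rw [hv1]
      field_simp
      linear_combination h1

end
end IllposedAux


namespace IllposedAux
noncomputable section

lemma vbase_ne_zero {b : Fin 7 → ℝ} (hrank : (Mcam b).rank = 3) : vbase b ≠ 0 := by
  intro hv
  have h0 := congrFun hv 0
  have h1 := congrFun hv 1
  have h2 := congrFun hv 2
  simp only [vbase, Matrix.cons_val_zero, Matrix.cons_val_one, Matrix.head_cons,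
    Matrix.cons_val_two, Matrix.tail_cons, Pi.zero_apply] at h0 h1 h2
  have hr : Module.finrank ℝ ↥(LinearMap.range (Mcam b).mulVecLin) = 3 := hrank
  have htop : LinearMap.range (Mcam b).mulVecLin = ⊤ := by
    apply Submodule.eq_top_of_finrank_eq
    rw [hr]
    simp
  obtain ⟨x, hx⟩ := LinearMap.range_eq_top.mp htop ![0, 1, 0]
  have e0 := congrFun hx 0
  have e1 := congrFun hx 1
  have e2 := congrFun hx 2
  simp [Matrix.mulVecLin_apply, Mcam, Matrix.mulVec, dotProduct, Fin.sum_univ_four] at e0 e1 e2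
  have hcontra : (0 : ℝ) = 1 := by
    linear_combination e1 - b 3 * e0 - (b 6 - b 2 * b 3) * e2 + x 1 * h2 - x 2 * h1
  exact zero_ne_one hcontra

lemma m1_dot_app1 (b : Fin 7 → ℝ) (Xv : Fin 3 → ℝ) :
    m1 b ⬝ᵥ app1 Xv = Xv 0 + b 0 * Xv 1 + b 1 * Xv 2 := by
  simp [m1, app1, dotProduct, Fin.sum_univ_four]

lemma m2_dot_app1 (b : Fin 7 → ℝ) (Xv : Fin 3 → ℝ) :
    m2 b ⬝ᵥ app1 Xv = b 3 * Xv 0 + b 4 * Xv 1 + b 5 * Xv 2 := by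
  simp [m2, app1, dotProduct, Fin.sum_univ_four]

lemma d1_dot_app1 (c : Fin 7 → ℝ) (Xv : Fin 3 → ℝ) :
    (![0, c 0, c 1, c 2] : Fin 4 → ℝ) ⬝ᵥ app1 Xv = c 0 * Xv 1 + c 1 * Xv 2 + c 2 := by
  simp [app1, dotProduct, Fin.sum_univ_four]

lemma d2_dot_app1 (c : Fin 7 → ℝ) (Xv : Fin 3 → ℝ) :
    (![c 3, c 4, c 5, c 6] : Fin 4 → ℝ) ⬝ᵥ app1 Xv
      = c 3 * Xv 0 + c 4 * Xv 1 + c 5 * Xv 2 + c 6 := by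
  simp [app1, dotProduct, Fin.sum_univ_four]

lemma Z2_eq_one (b : Fin 7 → ℝ) (Xv : Fin 3 → ℝ) :
    mulVec4E (Mcam b) (app1 Xv) 2 = 1 := by
  simp [mulVec4E, Mcam, app1, Matrix.mulVec, dotProduct, Fin.sum_univ_four]

lemma u0_eq (b c : Fin 7 → ℝ) (w : EuclideanSpace ℝ (Fin 3)) (Xv : Fin 3 → ℝ) :
    (mulVecE (Mcam3 b) w + mulVec4E (dM c) (app1 Xv)) 0
      = (w 0 + b 0 * w 1 + b 1 * w 2) + (c 0 * Xv 1 + c 1 * Xv 2 + c 2) := by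
  simp [mulVecE, mulVec4E, Mcam3, Mcam, dM, app1, Matrix.mulVec, dotProduct,
    Fin.sum_univ_three, Fin.sum_univ_four, Matrix.submatrix_apply, Fin.castSucc,
    Fin.castAdd, Fin.castLE]
  try ring

lemma u1_eq (b c : Fin 7 → ℝ) (w : EuclideanSpace ℝ (Fin 3)) (Xv : Fin 3 → ℝ) :
    (mulVecE (Mcam3 b) w + mulVec4E (dM c) (app1 Xv)) 1
      = (b 3 * w 0 + b 4 * w 1 + b 5 * w 2) + (c 3 * Xv 0 + c 4 * Xv 1 + c 5 * Xv 2 + c 6) := by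
  simp [mulVecE, mulVec4E, Mcam3, Mcam, dM, app1, Matrix.mulVec, dotProduct,
    Fin.sum_univ_three, Fin.sum_univ_four, Matrix.submatrix_apply, Fin.castSucc,
    Fin.castAdd, Fin.castLE]
  try ring

lemma u2_eq (b c : Fin 7 → ℝ) (w : EuclideanSpace ℝ (Fin 3)) (Xv : Fin 3 → ℝ) :
    (mulVecE (Mcam3 b) w + mulVec4E (dM c) (app1 Xv)) 2 = 0 := by
  simp [mulVecE, mulVec4E, Mcam3, Mcam, dM, app1, Matrix.mulVec, dotProduct,
    Fin.sum_univ_three, Fin.sum_univ_four, Matrix.submatrix_apply, Fin.castSucc,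
    Fin.castAdd, Fin.castLE]
  try ring

end
end IllposedAux

/-- Ill-posed world scenes for fundamental matrix estimation: the differential `T` of the
uncalibrated two-view forward projection map at the world scene `(b, X₁, …, X₇)` fails to be
injective iff there exists a quadric surface (a nonzero symmetric 4×4 matrix `Q`) passing
through `X₁, …, X₇` and containing the baseline, the line through the origin with
direction `v(b)`. -/
theorem illposed_world_scenes_fundamental
    (b : Fin 7 → ℝ) (hrank : (Mcam b).rank = 3)
    (X : Fin 7 → EuclideanSpace ℝ (Fin 3))
    (hX : ∀ i, X i 2 ≠ 0) :
    ¬ Function.Injective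
        (fun p : (Fin 7 → EuclideanSpace ℝ (Fin 3)) × (Fin 7 → ℝ) =>
          fun i : Fin 7 =>
            (fderiv ℝ projE (X i) (p.1 i),
             fderiv ℝ projE (mulVec4E (Mcam b) (app1 (X i)))
               (mulVecE (Mcam3 b) (p.1 i) + mulVec4E (dM p.2) (app1 (X i))))) ↔
      ∃ Q : Matrix (Fin 4) (Fin 4) ℝ, Q.IsSymm ∧ Q ≠ 0 ∧
        (∀ i, app1 (X i) ⬝ᵥ Q.mulVec (app1 (X i)) = 0) ∧
        (∀ s : ℝ, app1 (s • vbase b) ⬝ᵥ Q.mulVec (app1 (s • vbase b)) = 0) := by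
  classical
  have hv : vbase b ≠ 0 := IllposedAux.vbase_ne_zero hrank
  have hY3 : ∀ i, app1 (X i) 3 = 1 := fun i => rfl
  have hbase : ∀ s : ℝ, app1 (s • vbase b) = s • IllposedAux.Pv b + IllposedAux.E4 := by
    intro s
    funext k
    fin_cases k <;> simp [app1, IllposedAux.Pv, IllposedAux.E4]
  have hiff : (∃ Q : Matrix (Fin 4) (Fin 4) ℝ, Q.IsSymm ∧ Q ≠ 0 ∧
        (∀ i, app1 (X i) ⬝ᵥ Q.mulVec (app1 (X i)) = 0) ∧
        (∀ s : ℝ, app1 (s • vbase b) ⬝ᵥ Q.mulVec (app1 (s • vbase b)) = 0)) ↔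
      (∃ Q : Matrix (Fin 4) (Fin 4) ℝ, Q.IsSymm ∧ Q ≠ 0 ∧
        (∀ i, (fun j => app1 (X j)) i ⬝ᵥ Q.mulVec ((fun j => app1 (X j)) i) = 0) ∧
        (∀ s : ℝ, (s • IllposedAux.Pv b + IllposedAux.E4) ⬝ᵥ
          Q.mulVec (s • IllposedAux.Pv b + IllposedAux.E4) = 0)) := by
    apply exists_congr
    intro Q
    refine and_congr_right fun _ => and_congr_right fun _ => and_congr_right fun _ =>
      forall_congr' fun s => ?_
    rw [hbase s]
  rw [hiff, ← IllposedAux.kern_iff hv (fun j => app1 (X j)) hY3]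
  constructor
  · intro hni
    obtain ⟨p, p', hT, hne⟩ := Function.not_injective_iff.mp hni
    have hker1 : ∀ i, fderiv ℝ projE (X i) (p.1 i - p'.1 i) = 0 := by
      intro i
      have h := congrArg Prod.fst (congrFun hT i)
      simp only at h
      rw [map_sub, h, sub_self]
    have hker2 : ∀ i, fderiv ℝ projE (mulVec4E (Mcam b) (app1 (X i)))
        (mulVecE (Mcam3 b) (p.1 i - p'.1 i) + mulVec4E (dM (p.2 - p'.2)) (app1 (X i))) = 0 := by
      intro i
      have h := congrArg Prod.snd (congrFun hT i)
      simp only at h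
      have hdiff : mulVecE (Mcam3 b) (p.1 i - p'.1 i) + mulVec4E (dM (p.2 - p'.2)) (app1 (X i))
          = (mulVecE (Mcam3 b) (p.1 i) + mulVec4E (dM p.2) (app1 (X i)))
            - (mulVecE (Mcam3 b) (p'.1 i) + mulVec4E (dM p'.2) (app1 (X i))) := by
        ext k
        fin_cases k <;>
          · simp [mulVecE, mulVec4E, Mcam3, Mcam, dM, app1, Matrix.mulVec, dotProduct,
              Fin.sum_univ_three, Fin.sum_univ_four, Matrix.submatrix_apply, Fin.castSucc,
              Fin.castAdd, Fin.castLE]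
            try ring
      rw [hdiff, map_sub, h, sub_self]
    refine ⟨fun i => (p.1 i - p'.1 i) 2 / X i 2, p.2 - p'.2, ?_, ?_⟩
    · rintro ⟨hlam, hc⟩
      apply hne
      have hw : ∀ i, p.1 i - p'.1 i = 0 := by
        intro i
        have h1 := (IllposedAux.fderiv_projE_zero_iff (X i) (hX i) _).mp (hker1 i)
        have hl := congrFun hlam i
        simp only [Pi.zero_apply] at hl
        have hw2 : (p.1 i - p'.1 i) 2 = 0 := by
          rcases div_eq_zero_iff.mp hl with h | h
          · exact h
          · exact absurd h (hX i)
        ext k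
        fin_cases k
        · have hh := h1.1
          rw [hw2] at hh
          show (p.1 i - p'.1 i) 0 = 0
          have := mul_eq_zero.mp (by linarith : (p.1 i - p'.1 i) 0 * X i 2 = 0)
          rcases this with h | h
          · exact h
          · exact absurd h (hX i)
        · have hh := h1.2
          rw [hw2] at hh
          show (p.1 i - p'.1 i) 1 = 0
          have := mul_eq_zero.mp (by linarith : (p.1 i - p'.1 i) 1 * X i 2 = 0)
          rcases this with h | h
          · exact h
          · exact absurd h (hX i)
        · exact hw2
      have h1 : p.1 = p'.1 := funext fun i => sub_eq_zero.mp (hw i)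
      have h2 : p.2 = p'.2 := sub_eq_zero.mp hc
      exact Prod.ext h1 h2
    · intro i
      have h1 := (IllposedAux.fderiv_projE_zero_iff (X i) (hX i) _).mp (hker1 i)
      have h2 := (IllposedAux.fderiv_projE_zero_iff _
        (by rw [IllposedAux.Z2_eq_one b (X i)]; norm_num) _).mp (hker2 i)
      have hu2 : (mulVecE (Mcam3 b) (p.1 i - p'.1 i)
          + mulVec4E (dM (p.2 - p'.2)) (app1 (X i))) 2 = 0 := IllposedAux.u2_eq b _ _ _
      have hZ2 : mulVec4E (Mcam b) (app1 (X i)) 2 = 1 := IllposedAux.Z2_eq_one b (X i)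
      have hu0 : (mulVecE (Mcam3 b) (p.1 i - p'.1 i)
          + mulVec4E (dM (p.2 - p'.2)) (app1 (X i))) 0 = 0 := by
        have hh := h2.1
        rw [hu2, hZ2] at hh
        linarith
      have hu1 : (mulVecE (Mcam3 b) (p.1 i - p'.1 i)
          + mulVec4E (dM (p.2 - p'.2)) (app1 (X i))) 1 = 0 := by
        have hh := h2.2
        rw [hu2, hZ2] at hh
        linarith
      rw [IllposedAux.u0_eq] at hu0
      rw [IllposedAux.u1_eq] at hu1
      have hw2X : (p.1 i - p'.1 i) 2 / X i 2 * X i 2 = (p.1 i - p'.1 i) 2 :=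
        div_mul_cancel₀ _ (hX i)
      have hd0 : (p.1 i - p'.1 i) 2 / X i 2 * X i 0 = (p.1 i - p'.1 i) 0 := by
        rw [div_mul_eq_mul_div, div_eq_iff (hX i)]
        linarith [h1.1]
      have hd1 : (p.1 i - p'.1 i) 2 / X i 2 * X i 1 = (p.1 i - p'.1 i) 1 := by
        rw [div_mul_eq_mul_div, div_eq_iff (hX i)]
        linarith [h1.2]
      constructor
      · rw [IllposedAux.m1_dot_app1, IllposedAux.d1_dot_app1]
        linear_combination hu0 + hd0 + b 0 * hd1 + b 1 * hw2X
      · rw [IllposedAux.m2_dot_app1, IllposedAux.d2_dot_app1]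
        linear_combination hu1 + b 3 * hd0 + b 4 * hd1 + b 5 * hw2X
  · rintro ⟨lam, c, hne, heq⟩
    rw [Function.not_injective_iff]
    refine ⟨(fun i => lam i • X i, c), (0, 0), ?_, ?_⟩
    · funext i
      have hz1 : fderiv ℝ projE (X i) ((0 : Fin 7 → EuclideanSpace ℝ (Fin 3)) i) = 0 := by
        simp only [Pi.zero_apply, map_zero]
      have hz2 : mulVecE (Mcam3 b) ((0 : Fin 7 → EuclideanSpace ℝ (Fin 3)) i)
          + mulVec4E (dM (0 : Fin 7 → ℝ)) (app1 (X i)) = 0 := by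
        ext k
        fin_cases k <;>
          simp [mulVecE, mulVec4E, Mcam3, Mcam, dM, app1, Matrix.mulVec, dotProduct,
            Fin.sum_univ_three, Fin.sum_univ_four, Matrix.submatrix_apply, Fin.castSucc,
            Fin.castAdd, Fin.castLE]
      refine Prod.ext ?_ ?_
      · show fderiv ℝ projE (X i) (lam i • X i)
            = fderiv ℝ projE (X i) ((0 : Fin 7 → EuclideanSpace ℝ (Fin 3)) i)
        rw [hz1]
        apply (IllposedAux.fderiv_projE_zero_iff (X i) (hX i) _).mpr
        constructor
        · show (lam i • X i) 0 * X i 2 - X i 0 * (lam i • X i) 2 = 0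
          show lam i * X i 0 * X i 2 - X i 0 * (lam i * X i 2) = 0
          ring
        · show (lam i • X i) 1 * X i 2 - X i 1 * (lam i • X i) 2 = 0
          show lam i * X i 1 * X i 2 - X i 1 * (lam i * X i 2) = 0
          ring
      · show fderiv ℝ projE (mulVec4E (Mcam b) (app1 (X i)))
            (mulVecE (Mcam3 b) (lam i • X i) + mulVec4E (dM c) (app1 (X i)))
          = fderiv ℝ projE (mulVec4E (Mcam b) (app1 (X i)))
            (mulVecE (Mcam3 b) ((0 : Fin 7 → EuclideanSpace ℝ (Fin 3)) i)
              + mulVec4E (dM (0 : Fin 7 → ℝ)) (app1 (X i)))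
        rw [hz2, map_zero]
        have hZ2 : mulVec4E (Mcam b) (app1 (X i)) 2 = 1 := IllposedAux.Z2_eq_one b (X i)
        apply (IllposedAux.fderiv_projE_zero_iff _ (by rw [hZ2]; norm_num) _).mpr
        have hu2 : (mulVecE (Mcam3 b) (lam i • X i) + mulVec4E (dM c) (app1 (X i))) 2 = 0 :=
          IllposedAux.u2_eq b _ _ _
        have hsm : ∀ k : Fin 3, (lam i • X i) k = lam i * X i k := fun k => rfl
        have hu0 : (mulVecE (Mcam3 b) (lam i • X i) + mulVec4E (dM c) (app1 (X i))) 0 = 0 := by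
          rw [IllposedAux.u0_eq, hsm 0, hsm 1, hsm 2]
          have h := (heq i).1
          rw [IllposedAux.m1_dot_app1, IllposedAux.d1_dot_app1] at h
          linear_combination h
        have hu1 : (mulVecE (Mcam3 b) (lam i • X i) + mulVec4E (dM c) (app1 (X i))) 1 = 0 := by
          rw [IllposedAux.u1_eq, hsm 0, hsm 1, hsm 2]
          have h := (heq i).2
          rw [IllposedAux.m2_dot_app1, IllposedAux.d2_dot_app1] at h
          linear_combination h
        constructor
        · rw [hu0, hu2, hZ2]
          ring
        · rw [hu1, hu2, hZ2]
          ring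
    · intro hpp
      apply hne
      constructor
      · funext i
        have h := congrArg (fun z => z.1 i 2) hpp
        simp only at h
        have h' : lam i * X i 2 = 0 := h
        show lam i = 0
        rcases mul_eq_zero.mp h' with h'' | h''
        · exact h''
        · exact absurd h'' (hX i)
      · exact congrArg Prod.snd hpp
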